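/- arXiv:1304.5278 — 6 statements merged into one kernel-verified Lean document; each statement's English description precedes it below -/
import Mathlib

section
/- Modal refinement is transitive and implies thorough refinement: for states s₀ and t₀ of parametric modal transition systems, if s₀ ≤ₘ t₀ (modal refinement), then every implementation i with i ≤ₘ s₀ also satisfies i ≤ₘ t₀; hence ⟦s₀⟧ ⊆ ⟦t₀⟧, i.e., s₀ ≤ₜ t₀. -/
/-- Boolean formulae over a set of atomic propositions `X`. -/
inductive BForm (X : Type) : Type where
  | tt : BForm X
  | var : X → BForm X
  | neg : BForm X → BForm X
  | and : BForm X → BForm X → BForm X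
  | or : BForm X → BForm X → BForm X

/-- Satisfaction of a Boolean formula under a valuation (set of true atoms). -/
def BForm.sat {X : Type} (ν : Set X) : BForm X → Prop
  | .tt => True
  | .var x => x ∈ ν
  | .neg φ => ¬ BForm.sat ν φ
  | .and φ ψ => BForm.sat ν φ ∧ BForm.sat ν ψ
  | .or φ ψ => BForm.sat ν φ ∨ BForm.sat ν ψ

/-- Substitute a formula for each atom. -/
def BForm.map {X Y : Type} (f : X → BForm Y) : BForm X → BForm Y
  | .tt => .tt
  | .var x => f x
  | .neg φ => .neg (BForm.map f φ)
  | .and φ ψ => .and (BForm.map f φ) (BForm.map f ψ)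
  | .or φ ψ => .or (BForm.map f φ) (BForm.map f ψ)

def BForm.xor {X : Type} (φ ψ : BForm X) : BForm X :=
  .or (.and φ (.neg ψ)) (.and (.neg φ) ψ)

def BForm.iff {X : Type} (φ ψ : BForm X) : BForm X :=
  .and (.or (.neg φ) ψ) (.or φ (.neg ψ))

/-- A parametric modal transition system over alphabet `A`, states `S`, parameters `P`. -/
structure PMTS (A S P : Type) : Type where
  T : Set (S × A × S)
  Φ : S → BForm ((A × S) ⊕ P)

/-- A Boolean modal transition system is a PMTS with an empty parameter set. -/
abbrev BMTS (A S : Type) := PMTS A S Empty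

/-- `T(s)`: the outgoing transitions of `s`. -/
def PMTS.Tsucc {A S P : Type} (M : PMTS A S P) (s : S) : Set (A × S) :=
  {p | (s, p.1, p.2) ∈ M.T}

/-- `Tran_ν(s)`: admissible sets of outgoing transitions under parameter valuation `ν`. -/
def PMTS.Tran {A S P : Type} (M : PMTS A S P) (ν : Set P) (s : S) : Set (Set (A × S)) :=
  {E | E ⊆ M.Tsucc s ∧ BForm.sat (Sum.inl '' E ∪ Sum.inr '' ν) (M.Φ s)}

open Classical in
/-- Substitution of truth values for parameters according to a valuation `ν`. -/
noncomputable def paramSubst {X P : Type} (ν : Set P) : X ⊕ P → BForm (X ⊕ Empty)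
  | Sum.inl x => .var (Sum.inl x)
  | Sum.inr p => if p ∈ ν then .tt else .neg .tt

/-- The BMTS `M^ν` induced by a parameter valuation `ν`. -/
noncomputable def PMTS.toBMTS {A S P : Type} (M : PMTS A S P) (ν : Set P) : BMTS A S where
  T := M.T
  Φ := fun s => (M.Φ s).map (paramSubst ν)

/-- The modal-refinement condition on a relation `R`, w.r.t. valuations `μ` and `ν`. -/
def RefCond {A S1 S2 P1 P2 : Type} (M1 : PMTS A S1 P1) (M2 : PMTS A S2 P2)
    (μ : Set P1) (ν : Set P2) (R : Set (S1 × S2)) : Prop :=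
  ∀ p ∈ R, ∀ Ms ∈ M1.Tran μ p.1, ∃ N ∈ M2.Tran ν p.2,
    (∀ q ∈ Ms, ∃ t' : S2, (q.1, t') ∈ N ∧ (q.2, t') ∈ R) ∧
    (∀ q ∈ N, ∃ s' : S1, (q.1, s') ∈ Ms ∧ (s', q.2) ∈ R)

/-- `R` is a modal refinement relation between two BMTS. -/
def IsRefRel {A S1 S2 : Type} (M1 : BMTS A S1) (M2 : BMTS A S2) (R : Set (S1 × S2)) : Prop :=
  RefCond M1 M2 ∅ ∅ R

/-- Modal refinement on BMTS. -/
def BRefines {A S1 S2 : Type} (M1 : BMTS A S1) (M2 : BMTS A S2) (s : S1) (t : S2) : Prop :=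
  ∃ R : Set (S1 × S2), (s, t) ∈ R ∧ IsRefRel M1 M2 R

/-- Modal refinement on PMTS (valuation-wise definition). -/
def PRefines {A S1 S2 P1 P2 : Type} (M1 : PMTS A S1 P1) (M2 : PMTS A S2 P2)
    (s : S1) (t : S2) : Prop :=
  ∀ μ : Set P1, ∃ ν : Set P2, BRefines (M1.toBMTS μ) (M2.toBMTS ν) s t

/-- An implementation: every state's only admissible transition set is its full set of
transitions (i.e. `Φ(s)` is the conjunction of all outgoing transitions). -/
def PMTS.IsImplementation {A S : Type} (M : BMTS A S) : Prop :=
  ∀ s : S, M.Tran ∅ s = {M.Tsucc s}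

/-- Thorough refinement: inclusion of sets of implementations. -/
def ThoroughRefines {A S1 S2 P1 P2 : Type} (M1 : PMTS A S1 P1) (M2 : PMTS A S2 P2)
    (s : S1) (t : S2) : Prop :=
  ∀ (SI : Type) (I : BMTS A SI) (i : SI), I.IsImplementation →
    PRefines I M1 i s → PRefines I M2 i t

/-- A PMTS is deterministic if no state has two distinct successors under the same action. -/
def PMTS.Deterministic {A S P : Type} (M : PMTS A S P) : Prop :=
  ∀ s a t t', (s, a, t) ∈ M.T → (s, a, t') ∈ M.T → t = t'

/-- Global (semantic) consistency: every state has an implementation. -/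
def PMTS.SemConsistent {A S : Type} (M : BMTS A S) : Prop :=
  ∀ s : S, ∃ (SI : Type) (I : BMTS A SI) (i : SI), I.IsImplementation ∧ BRefines I M i s

/-- Parameter substitution used in the de-parameterization, also retagging states
with the valuation. -/
def deParamSubst {A S P : Type} [DecidableEq P] (ν : Finset P) :
    (A × S) ⊕ P → BForm ((A × Option (S × Finset P)) ⊕ Empty)
  | Sum.inl q => .var (Sum.inl (q.1, some (q.2, ν)))
  | Sum.inr p => if p ∈ ν then .tt else .neg .tt

/-- The de-parameterization `M^B` of a PMTS `M` with initial state `s0`.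
The state `none` plays the rôle of `s0^B`. -/
noncomputable def PMTS.deParam {A S P : Type} [Fintype P] [DecidableEq P] (M : PMTS A S P) (s0 : S) :
    BMTS A (Option (S × Finset P)) where
  T := {x | (∃ a s ν, x = (none, a, some (s, ν)) ∧ (s0, a, s) ∈ M.T) ∨
            (∃ s a s' ν, x = (some (s, ν), a, some (s', ν)) ∧ (s, a, s') ∈ M.T)}
  Φ := fun st => match st with
    | none => (Finset.univ : Finset (Finset P)).toList.foldr
        (fun ν acc => BForm.xor ((M.Φ s0).map (deParamSubst ν)) acc) (.neg .tt)
    | some (s, ν) => (M.Φ s).map (deParamSubst ν)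

/-- The set of `a`-successors of a set of states. -/
def PMTS.succSet {A S P : Type} (M : PMTS A S P) (X : Set S) (a : A) : Set S :=
  {s' | ∃ s ∈ X, (s, a, s') ∈ M.T}

/-- The deterministic hull `𝒟(M)` of a PMTS (powerset construction). -/
noncomputable def PMTS.detHull {A S P : Type} [Fintype S] (M : PMTS A S P) :
    PMTS A (Set S) P where
  T := {x | x.2.2 = M.succSet x.1 x.2.1}
  Φ := fun X => ((Set.toFinite X).toFinset).toList.foldr
    (fun s acc => .or ((M.Φ s).map (fun y => match y with
      | Sum.inl q => .var (Sum.inl (q.1, M.succSet X q.1))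
      | Sum.inr p => .var (Sum.inr p))) acc) (.neg .tt)

open Classical in
/-- The parameter-free hull `𝒫(M)` of a PMTS. -/
noncomputable def PMTS.pfHull {A S P : Type} [Fintype P] [DecidableEq P] (M : PMTS A S P) :
    BMTS A S where
  T := M.T
  Φ := fun s => (Finset.univ : Finset (Finset P)).toList.foldr
    (fun ν acc => .or ((M.Φ s).map (paramSubst (↑ν : Set P))) acc) (.neg .tt)

open Classical in
/-- Removing a state `s` (and all transitions involving it) from a BMTS. -/
noncomputable def PMTS.removeState {A S : Type} (M : BMTS A S) (s : S) :
    BMTS A {t : S // t ≠ s} where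
  T := {x | (x.1.1, x.2.1, x.2.2.1) ∈ M.T}
  Φ := fun t => (M.Φ t.1).map (fun y => match y with
    | Sum.inl q => if h : q.2 = s then .neg .tt else .var (Sum.inl (q.1, ⟨q.2, h⟩))
    | Sum.inr e => Empty.elim e)

/-- The PMTS witnessing the unavoidable exponential blowup of de-parameterization:
actions are the parameters, and both steps must take exactly the transitions whose
parameter is true. -/
noncomputable def blowupPMTS (P : Type) [Fintype P] [DecidableEq P] : PMTS P (Fin 3) P where
  T := {x | ∃ p : P, x = (0, p, 1) ∨ x = (1, p, 2)}
  Φ := fun s =>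
    if s = 0 then
      (Finset.univ : Finset P).toList.foldr
        (fun p acc => .and (BForm.iff (.var (Sum.inl (p, (1 : Fin 3)))) (.var (Sum.inr p))) acc) .tt
    else if s = 1 then
      (Finset.univ : Finset P).toList.foldr
        (fun p acc => .and (BForm.iff (.var (Sum.inl (p, (2 : Fin 3)))) (.var (Sum.inr p))) acc) .tt
    else .tt

/-- A classical modal transition system. -/
structure MTS (A S : Type) where
  may : Set (S × A × S)
  must : Set (S × A × S)
  must_sub : must ⊆ may

/-- Classical MTS modal refinement. -/
def MTSRefines {A S1 S2 : Type} (N1 : MTS A S1) (N2 : MTS A S2) (s0 : S1) (t0 : S2) : Prop :=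
  ∃ R : Set (S1 × S2), (s0, t0) ∈ R ∧ ∀ p ∈ R,
    (∀ a s', (p.1, a, s') ∈ N1.may → ∃ t', (p.2, a, t') ∈ N2.may ∧ (s', t') ∈ R) ∧
    (∀ a t', (p.2, a, t') ∈ N2.must → ∃ s', (p.1, a, s') ∈ N1.must ∧ (s', t') ∈ R)

/-- A BMTS corresponds to an MTS when its transitions are the may-transitions and the
admissible transition sets are exactly those between the must- and may-successors
(i.e. `Φ(s)` is the conjunction of the must-transitions of `s`). -/
def Corresponds {A S : Type} (N : MTS A S) (M : BMTS A S) : Prop :=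
  M.T = N.may ∧
  ∀ s, M.Tran ∅ s = {E | {q : A × S | (s, q.1, q.2) ∈ N.must} ⊆ E ∧ E ⊆ M.Tsucc s}

/-- The `Avoid` set: the least set of pairs `(s, 𝒯)` closed under the rules of the
thorough-refinement algorithm for BMTS. -/
inductive Avoid {A S : Type} (M : BMTS A S) : S → Set S → Prop
  | empty (s : S) : Avoid M s ∅
  | step (s : S) (𝒯 : Set S) (Ms : Set (A × S)) (later : A → S → Set (A × S) → Set S)
      (hM : Ms ∈ M.Tran ∅ s)
      (h1 : ∀ t ∈ 𝒯, ∀ Nt ∈ M.Tran ∅ t, ∃ a : A,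
        (∃ ta, (a, ta) ∈ Nt ∧ ∀ sa, (a, sa) ∈ Ms →
          ∀ f, (∃ t' ∈ 𝒯, f ∈ M.Tran ∅ t') → ta ∈ later a sa f) ∨
        (∃ sa, (a, sa) ∈ Ms ∧ ∀ ta, (a, ta) ∈ Nt → ta ∈ later a sa Nt))
      (h2 : ∀ f, (∃ t' ∈ 𝒯, f ∈ M.Tran ∅ t') →
        ∀ a sa, (a, sa) ∈ Ms → Avoid M sa (later a sa f)) :
      Avoid M s 𝒯

/-- The decreasing sequence `Rⁿ_{μ,ν}` of bounded modal refinement relations. -/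
def BoundedRel {A S1 S2 P1 P2 : Type} (M1 : PMTS A S1 P1) (M2 : PMTS A S2 P2)
    (μ : Set P1) (ν : Set P2) : ℕ → Set (S1 × S2)
  | 0 => Set.univ
  | n + 1 => {p | ∀ Ms ∈ M1.Tran μ p.1, ∃ N ∈ M2.Tran ν p.2,
      (∀ q ∈ Ms, ∃ t' : S2, (q.1, t') ∈ N ∧ (q.2, t') ∈ BoundedRel M1 M2 μ ν n) ∧
      (∀ q ∈ N, ∃ s' : S1, (q.1, s') ∈ Ms ∧ (s', q.2) ∈ BoundedRel M1 M2 μ ν n)}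

/-- The de-negation DMTS `M^D` of a BMTS: its states are the admissible transition sets. -/
noncomputable def PMTS.deNeg {A S : Type} [Fintype A] [Fintype S] (M : BMTS A S) :
    BMTS A (Set (A × S)) where
  T := {x | ∃ s' : S, (x.2.1, s') ∈ x.1 ∧ x.2.2 ∈ M.Tran ∅ s'}
  Φ := fun E => ((Set.toFinite E).toFinset).toList.foldr
    (fun q acc => .and
      (((Set.toFinite (M.Tran ∅ q.2)).toFinset).toList.foldr
        (fun M' acc2 => .or (.var (Sum.inl (q.1, M'))) acc2) (.neg .tt)) acc) .tt

theorem BRefines.trans {A S1 S2 S3 : Type} {M1 : BMTS A S1} {M2 : BMTS A S2}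
    {M3 : BMTS A S3} {s : S1} {t : S2} {u : S3}
    (h12 : BRefines M1 M2 s t) (h23 : BRefines M2 M3 t u) : BRefines M1 M3 s u := by
  obtain ⟨R1, hst, hR1⟩ := h12
  obtain ⟨R2, htu, hR2⟩ := h23
  refine ⟨{p | ∃ t, (p.1, t) ∈ R1 ∧ (t, p.2) ∈ R2}, ⟨t, hst, htu⟩, ?_⟩
  rintro ⟨s, u⟩ ⟨t, h1, h2⟩ Ms hMs
  obtain ⟨N, hN, hf1, hb1⟩ := hR1 (s, t) h1 Ms hMs
  obtain ⟨N', hN', hf2, hb2⟩ := hR2 (t, u) h2 N hN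
  refine ⟨N', hN', ?_, ?_⟩
  · rintro ⟨a, s'⟩ hq
    obtain ⟨t', ht'N, ht'R⟩ := hf1 _ hq
    obtain ⟨u', hu'N', hu'R⟩ := hf2 (a, t') ht'N
    exact ⟨u', hu'N', t', ht'R, hu'R⟩
  · rintro ⟨a, u'⟩ hq
    obtain ⟨t', ht'N, ht'R⟩ := hb2 _ hq
    obtain ⟨s', hs'M, hs'R⟩ := hb1 (a, t') ht'N
    exact ⟨s', hs'M, t', hs'R, ht'R⟩

theorem modal_refinement_implies_thorough
    {A S1 S2 P1 P2 : Type} (M1 : PMTS A S1 P1) (M2 : PMTS A S2 P2)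
    (s0 : S1) (t0 : S2) (h : PRefines M1 M2 s0 t0) :
    (∀ (SI : Type) (I : BMTS A SI) (i : SI), I.IsImplementation →
      PRefines I M1 i s0 → PRefines I M2 i t0) ∧
    ThoroughRefines M1 M2 s0 t0 := by
  have key : ∀ (SI : Type) (I : BMTS A SI) (i : SI), I.IsImplementation →
      PRefines I M1 i s0 → PRefines I M2 i t0 := by
    intro SI I i _ hIs μ
    obtain ⟨ν1, h1⟩ := hIs μ
    obtain ⟨ν2, h2⟩ := h ν1
    exact ⟨ν2, h1.trans h2⟩
  exact ⟨key, key⟩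
end

section
/- There exist states s₀ of a PMTS and t₀ of another PMTS such that s₀ modally refines t₀ in the valuation-wise sense (for every valuation μ of the left parameters there is a valuation ν of the right parameters with s₀^μ ≤ₘ t₀^ν), but there is no single fixed relation R witnessing refinement simultaneously for all valuations; hence the two definitions of PMTS modal refinement differ. A witnessing example: left system with parameter p, states s₀→s₁→s₂ under a, Φ(s₀)=(a,s₁), Φ(s₁)=((a,s₂)⇔p), Φ(s₂)=tt; right system with parameter q, transitions t₀→t₁→t₂ and t₀→t₁' under a, Φ(t₀)=((a,t₁)⇔q)∧((a,t₁')⇔¬q), Φ(t₁)=(a,t₂), Φ(t₂)=Φ(t₁')=tt. -/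
section CE

lemma BForm.sat_map {X Y : Type} (f : X → BForm Y) (V : Set Y) (φ : BForm X) :
    BForm.sat V (φ.map f) ↔ BForm.sat {x | BForm.sat V (f x)} φ := by
  induction φ <;> simp [BForm.map, BForm.sat, *]

lemma tran_toBMTS {A S P : Type} (M : PMTS A S P) (μ : Set P) (s : S) :
    (M.toBMTS μ).Tran ∅ s = M.Tran μ s := by
  have hval : ∀ E : Set (A × S),
      {y | BForm.sat (Sum.inl '' E ∪ Sum.inr '' (∅ : Set Empty)) (paramSubst μ y)}
        = Sum.inl '' E ∪ Sum.inr '' μ := by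
    intro E
    ext y
    rcases y with x | p
    · simp [paramSubst, BForm.sat]
    · by_cases h : p ∈ μ <;> simp [paramSubst, h, BForm.sat]
  ext E
  simp only [PMTS.Tran, PMTS.toBMTS, PMTS.Tsucc, Set.mem_setOf_eq, BForm.sat_map]
  rw [hval E]

lemma mem_val_inl {X P : Type} (V : Set X) (W : Set P) (x : X) :
    Sum.inl x ∈ Sum.inl '' V ∪ Sum.inr '' W ↔ x ∈ V := by simp

lemma mem_val_inr {X P : Type} (V : Set X) (W : Set P) (p : P) :
    (Sum.inr p : X ⊕ P) ∈ Sum.inl '' V ∪ Sum.inr '' W ↔ p ∈ W := by simp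

/-- Left system: s0 = 0, s1 = 1, s2 = 2. -/
def ceM1 : PMTS Unit (Fin 3) Unit where
  T := {x | x = (0, (), 1) ∨ x = (1, (), 2)}
  Φ := fun s =>
    if s = 0 then .var (.inl ((), 1))
    else if s = 1 then BForm.iff (.var (.inl ((), 2))) (.var (.inr ()))
    else .tt

/-- Right system: t0 = 0, t1 = 1, t1' = 2, t2 = 3. -/
def ceM2 : PMTS Unit (Fin 4) Unit where
  T := {x | x = (0, (), 1) ∨ x = (0, (), 2) ∨ x = (1, (), 3)}
  Φ := fun s =>
    if s = 0 then
      .and (BForm.iff (.var (.inl ((), 1))) (.var (.inr ())))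
           (BForm.iff (.var (.inl ((), 2))) (.neg (.var (.inr ()))))
    else if s = 1 then .var (.inl ((), 3))
    else .tt

lemma ceM1_tsucc0 : ceM1.Tsucc 0 = {((), 1)} := by
  ext ⟨u, s⟩
  simp only [ceM1, PMTS.Tsucc, Set.mem_setOf_eq, Prod.ext_iff, Set.mem_singleton_iff]
  constructor
  · rintro (⟨_, _, h⟩ | ⟨h, _⟩)
    · exact ⟨by trivial, h⟩
    · exact absurd h (by decide)
  · rintro ⟨_, h⟩
    exact Or.inl ⟨by trivial, by trivial, h⟩

lemma ceM1_tsucc1 : ceM1.Tsucc 1 = {((), 2)} := by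
  ext ⟨u, s⟩
  simp only [ceM1, PMTS.Tsucc, Set.mem_setOf_eq, Prod.ext_iff, Set.mem_singleton_iff]
  constructor
  · rintro (⟨h, _⟩ | ⟨_, _, h⟩)
    · exact absurd h (by decide)
    · exact ⟨by trivial, h⟩
  · rintro ⟨_, h⟩
    exact Or.inr ⟨by trivial, by trivial, h⟩

lemma ceM1_tsucc2 : ceM1.Tsucc 2 = ∅ := by
  ext ⟨u, s⟩
  simp only [ceM1, PMTS.Tsucc, Set.mem_setOf_eq, Prod.ext_iff, Set.mem_empty_iff_false,
    iff_false]
  rintro (⟨h, _⟩ | ⟨h, _⟩) <;> exact absurd h (by decide)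

lemma ceM2_tsucc0 : ceM2.Tsucc 0 = {((), 1), ((), 2)} := by
  ext ⟨u, s⟩
  simp only [ceM2, PMTS.Tsucc, Set.mem_setOf_eq, Prod.ext_iff, Set.mem_insert_iff,
    Set.mem_singleton_iff]
  constructor
  · rintro (⟨_, _, h⟩ | ⟨_, _, h⟩ | ⟨h, _⟩)
    · exact Or.inl ⟨by trivial, h⟩
    · exact Or.inr ⟨by trivial, h⟩
    · exact absurd h (by decide)
  · rintro (⟨_, h⟩ | ⟨_, h⟩)
    · exact Or.inl ⟨by trivial, by trivial, h⟩
    · exact Or.inr (Or.inl ⟨by trivial, by trivial, h⟩)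

lemma ceM2_tsucc1 : ceM2.Tsucc 1 = {((), 3)} := by
  ext ⟨u, s⟩
  simp only [ceM2, PMTS.Tsucc, Set.mem_setOf_eq, Prod.ext_iff, Set.mem_singleton_iff]
  constructor
  · rintro (⟨h, _⟩ | ⟨h, _⟩ | ⟨_, _, h⟩)
    · exact absurd h (by decide)
    · exact absurd h (by decide)
    · exact ⟨by trivial, h⟩
  · rintro ⟨_, h⟩
    exact Or.inr (Or.inr ⟨by trivial, by trivial, h⟩)

lemma ceM2_tsucc23 (t : Fin 4) (ht : t = 2 ∨ t = 3) : ceM2.Tsucc t = ∅ := by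
  rcases ht with rfl | rfl <;>
  · ext ⟨u, s⟩
    simp only [ceM2, PMTS.Tsucc, Set.mem_setOf_eq, Prod.ext_iff, Set.mem_empty_iff_false,
      iff_false]
    rintro (⟨h, _⟩ | ⟨h, _⟩ | ⟨h, _⟩) <;> exact absurd h (by decide)

lemma ceM1_sat0 (V : Set (Unit × Fin 3)) (W : Set Unit) :
    BForm.sat (Sum.inl '' V ∪ Sum.inr '' W) (ceM1.Φ 0) ↔ ((), 1) ∈ V := by
  show Sum.inl ((), 1) ∈ _ ↔ _
  exact mem_val_inl V W _

lemma ceM1_sat1 (V : Set (Unit × Fin 3)) (W : Set Unit) :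
    BForm.sat (Sum.inl '' V ∪ Sum.inr '' W) (ceM1.Φ 1) ↔ (((), 2) ∈ V ↔ () ∈ W) := by
  show ((¬ Sum.inl ((), 2) ∈ _ ∨ Sum.inr () ∈ _) ∧ (Sum.inl ((), 2) ∈ _ ∨ ¬ Sum.inr () ∈ _)) ↔ _
  rw [mem_val_inl, mem_val_inr]
  tauto

lemma ceM2_sat0 (V : Set (Unit × Fin 4)) (W : Set Unit) :
    BForm.sat (Sum.inl '' V ∪ Sum.inr '' W) (ceM2.Φ 0) ↔
      ((((), 1) ∈ V ↔ () ∈ W) ∧ (((), 2) ∈ V ↔ () ∉ W)) := by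
  show (((¬ Sum.inl ((), 1) ∈ _ ∨ Sum.inr () ∈ _) ∧ (Sum.inl ((), 1) ∈ _ ∨ ¬ Sum.inr () ∈ _)) ∧
    ((¬ Sum.inl ((), 2) ∈ _ ∨ ¬ Sum.inr () ∈ _) ∧ (Sum.inl ((), 2) ∈ _ ∨ ¬ ¬ Sum.inr () ∈ _))) ↔ _
  rw [mem_val_inl, mem_val_inl, mem_val_inr]
  tauto

lemma ceM2_sat1 (V : Set (Unit × Fin 4)) (W : Set Unit) :
    BForm.sat (Sum.inl '' V ∪ Sum.inr '' W) (ceM2.Φ 1) ↔ ((), 3) ∈ V := by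
  show Sum.inl ((), 3) ∈ _ ↔ _
  exact mem_val_inl V W _

lemma ceM1_tran0 (μ : Set Unit) (E : Set (Unit × Fin 3)) :
    E ∈ ceM1.Tran μ 0 ↔ E = {((), 1)} := by
  simp only [PMTS.Tran, Set.mem_setOf_eq, ceM1_sat0, ceM1_tsucc0]
  constructor
  · rintro ⟨h1, h2⟩
    exact Set.Subset.antisymm h1 (Set.singleton_subset_iff.2 h2)
  · rintro rfl
    exact ⟨le_refl _, rfl⟩

lemma ceM1_tran1 (μ : Set Unit) (E : Set (Unit × Fin 3)) :
    E ∈ ceM1.Tran μ 1 ↔ ((() ∈ μ ∧ E = {((), 2)}) ∨ (() ∉ μ ∧ E = ∅)) := by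
  simp only [PMTS.Tran, Set.mem_setOf_eq, ceM1_sat1, ceM1_tsucc1]
  constructor
  · rintro ⟨h1, h2⟩
    by_cases hμ : () ∈ μ
    · exact Or.inl ⟨hμ, Set.Subset.antisymm h1 (Set.singleton_subset_iff.2 (h2.2 hμ))⟩
    · refine Or.inr ⟨hμ, Set.eq_empty_iff_forall_notMem.2 fun q hq => ?_⟩
      have := h1 hq
      rw [Set.mem_singleton_iff] at this
      subst this
      exact hμ (h2.1 hq)
  · rintro (⟨hμ, rfl⟩ | ⟨hμ, rfl⟩)
    · exact ⟨le_refl _, by simp [hμ]⟩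
    · exact ⟨Set.empty_subset _, by simp [hμ]⟩

lemma ceM1_tran2 (μ : Set Unit) (E : Set (Unit × Fin 3)) :
    E ∈ ceM1.Tran μ 2 ↔ E = ∅ := by
  simp only [PMTS.Tran, Set.mem_setOf_eq, ceM1_tsucc2, Set.subset_empty_iff]
  refine ⟨fun h => h.1, fun h => ⟨h, ?_⟩⟩
  subst h
  show True
  trivial

lemma ceM2_tran0 (ν : Set Unit) (E : Set (Unit × Fin 4)) :
    E ∈ ceM2.Tran ν 0 ↔
      ((() ∈ ν ∧ E = {((), 1)}) ∨ (() ∉ ν ∧ E = {((), 2)})) := by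
  simp only [PMTS.Tran, Set.mem_setOf_eq, ceM2_sat0, ceM2_tsucc0]
  constructor
  · rintro ⟨h1, h2, h3⟩
    by_cases hν : () ∈ ν
    · refine Or.inl ⟨hν, Set.Subset.antisymm ?_ (Set.singleton_subset_iff.2 (h2.2 hν))⟩
      intro q hq
      rcases h1 hq with h | h
      · exact h
      · rw [Set.mem_singleton_iff] at h
        subst h
        exact absurd (h3.1 hq) (not_not_intro hν)
    · refine Or.inr ⟨hν, Set.Subset.antisymm ?_ (Set.singleton_subset_iff.2 (h3.2 hν))⟩
      intro q hq
      rcases h1 hq with h | h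
      · subst h
        exact absurd (h2.1 hq) hν
      · exact h
  · rintro (⟨hν, rfl⟩ | ⟨hν, rfl⟩)
    · refine ⟨Set.singleton_subset_iff.2 (Set.mem_insert _ _), ?_, ?_⟩
      · simp [hν]
      · simp only [Set.mem_singleton_iff, Prod.mk.injEq]
        constructor
        · rintro ⟨_, h⟩
          exact absurd h (by decide)
        · intro h
          exact absurd hν h
    · refine ⟨Set.singleton_subset_iff.2 (Set.mem_insert_of_mem _ rfl), ?_, ?_⟩
      · simp only [Set.mem_singleton_iff, Prod.mk.injEq]
        constructor
        · rintro ⟨_, h⟩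
          exact absurd h (by decide)
        · intro h
          exact absurd h hν
      · simp [hν]

lemma ceM2_tran1 (ν : Set Unit) (E : Set (Unit × Fin 4)) :
    E ∈ ceM2.Tran ν 1 ↔ E = {((), 3)} := by
  simp only [PMTS.Tran, Set.mem_setOf_eq, ceM2_sat1, ceM2_tsucc1]
  constructor
  · rintro ⟨h1, h2⟩
    exact Set.Subset.antisymm h1 (Set.singleton_subset_iff.2 h2)
  · rintro rfl
    exact ⟨le_refl _, rfl⟩

lemma ceM2_tran23 (ν : Set Unit) (t : Fin 4) (ht : t = 2 ∨ t = 3) (E : Set (Unit × Fin 4)) :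
    E ∈ ceM2.Tran ν t ↔ E = ∅ := by
  simp only [PMTS.Tran, Set.mem_setOf_eq, ceM2_tsucc23 t ht, Set.subset_empty_iff]
  refine ⟨fun h => h.1, fun h => ⟨h, ?_⟩⟩
  subst h
  rcases ht with rfl | rfl <;> · show True; trivial

/-- RefCond for the positive-valuation case. -/
lemma ceRefCond_pos (μ : Set Unit) (hμ : () ∈ μ) :
    RefCond ceM1 ceM2 μ Set.univ {(0, 0), (1, 1), (2, 3)} := by
  rintro ⟨s, t⟩ hst Ms hMs
  rw [Set.mem_insert_iff, Set.mem_insert_iff, Set.mem_singleton_iff] at hst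
  rcases hst with h | h | h <;> rw [Prod.ext_iff] at h <;> obtain ⟨h1, h2⟩ := h <;>
    simp only at h1 h2 <;> subst h1 <;> subst h2
  · -- (0,0)
    rw [ceM1_tran0] at hMs
    subst hMs
    refine ⟨{((), 1)}, (ceM2_tran0 _ _).2 (Or.inl ⟨Set.mem_univ _, rfl⟩), ?_, ?_⟩
    · intro q hq
      rw [Set.mem_singleton_iff] at hq
      subst hq
      exact ⟨1, rfl, by simp⟩
    · intro q hq
      rw [Set.mem_singleton_iff] at hq
      subst hq
      exact ⟨1, rfl, by simp⟩
  · -- (1,1)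
    rw [ceM1_tran1] at hMs
    rcases hMs with ⟨_, rfl⟩ | ⟨h, _⟩
    · refine ⟨{((), 3)}, (ceM2_tran1 _ _).2 rfl, ?_, ?_⟩
      · intro q hq
        rw [Set.mem_singleton_iff] at hq
        subst hq
        exact ⟨3, rfl, by simp⟩
      · intro q hq
        rw [Set.mem_singleton_iff] at hq
        subst hq
        exact ⟨2, rfl, by simp⟩
    · exact absurd hμ h
  · -- (2,3)
    rw [ceM1_tran2] at hMs
    subst hMs
    exact ⟨∅, (ceM2_tran23 _ 3 (Or.inr rfl) _).2 rfl, by simp, by simp⟩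

/-- RefCond for the negative-valuation case. -/
lemma ceRefCond_neg (μ : Set Unit) (hμ : () ∉ μ) :
    RefCond ceM1 ceM2 μ ∅ {(0, 0), (1, 2)} := by
  rintro ⟨s, t⟩ hst Ms hMs
  rw [Set.mem_insert_iff, Set.mem_singleton_iff] at hst
  rcases hst with h | h <;> rw [Prod.ext_iff] at h <;> obtain ⟨h1, h2⟩ := h <;>
    simp only at h1 h2 <;> subst h1 <;> subst h2
  · rw [ceM1_tran0] at hMs
    subst hMs
    refine ⟨{((), 2)}, (ceM2_tran0 _ _).2 (Or.inr ⟨Set.notMem_empty _, rfl⟩), ?_, ?_⟩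
    · intro q hq
      rw [Set.mem_singleton_iff] at hq
      subst hq
      exact ⟨2, rfl, by simp⟩
    · intro q hq
      rw [Set.mem_singleton_iff] at hq
      subst hq
      exact ⟨1, rfl, by simp⟩
  · rw [ceM1_tran1] at hMs
    rcases hMs with ⟨h, _⟩ | ⟨_, rfl⟩
    · exact absurd h hμ
    · exact ⟨∅, (ceM2_tran23 _ 2 (Or.inl rfl) _).2 rfl, by simp, by simp⟩

lemma cePRefines : PRefines ceM1 ceM2 0 0 := by
  intro μ
  by_cases hμ : () ∈ μ
  · refine ⟨Set.univ, {(0, 0), (1, 1), (2, 3)}, by simp, ?_⟩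
    intro p hp Ms hMs
    rw [tran_toBMTS] at hMs
    obtain ⟨N, hN, hc1, hc2⟩ := ceRefCond_pos μ hμ p hp Ms hMs
    exact ⟨N, (tran_toBMTS ceM2 Set.univ p.2).symm ▸ hN, hc1, hc2⟩
  · refine ⟨∅, {(0, 0), (1, 2)}, by simp, ?_⟩
    intro p hp Ms hMs
    rw [tran_toBMTS] at hMs
    obtain ⟨N, hN, hc1, hc2⟩ := ceRefCond_neg μ hμ p hp Ms hMs
    exact ⟨N, (tran_toBMTS ceM2 ∅ p.2).symm ▸ hN, hc1, hc2⟩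

lemma ceNoFixed : ¬ ∃ R : Set (Fin 3 × Fin 4), ((0 : Fin 3), (0 : Fin 4)) ∈ R ∧
    ∀ μ : Set Unit, ∃ ν : Set Unit, RefCond ceM1 ceM2 μ ν R := by
  rintro ⟨R, hR0, hR⟩
  obtain ⟨ν1, hν1⟩ := hR Set.univ
  obtain ⟨N, hN, h1, _⟩ := hν1 (0, 0) hR0 {((), 1)} ((ceM1_tran0 _ _).2 rfl)
  obtain ⟨t', ht'N, ht'R⟩ := h1 ((), 1) rfl
  rw [ceM2_tran0] at hN
  rcases hN with ⟨_, rfl⟩ | ⟨_, rfl⟩ <;> rw [Set.mem_singleton_iff] at ht'N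
  · -- N = {((),1)}, so t' = 1 and (1,1) ∈ R : use μ = ∅
    have ht1 : t' = 1 := congrArg Prod.snd ht'N
    subst ht1
    obtain ⟨ν2, hν2⟩ := hR ∅
    obtain ⟨N2, hN2, _, h2⟩ := hν2 (1, 1) ht'R ∅
      ((ceM1_tran1 _ _).2 (Or.inr ⟨Set.notMem_empty _, rfl⟩))
    rw [ceM2_tran1] at hN2
    subst hN2
    obtain ⟨s', hs', _⟩ := h2 ((), 3) rfl
    exact absurd hs' (Set.notMem_empty _)
  · -- N = {((),2)}, so t' = 2 and (1,2) ∈ R : reuse μ = univ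
    have ht1 : t' = 2 := congrArg Prod.snd ht'N
    subst ht1
    obtain ⟨N2, hN2, h1', _⟩ := hν1 (1, 2) ht'R {((), 2)}
      ((ceM1_tran1 _ _).2 (Or.inl ⟨Set.mem_univ _, rfl⟩))
    rw [ceM2_tran23 _ 2 (Or.inl rfl)] at hN2
    subst hN2
    obtain ⟨t'', ht''N, _⟩ := h1' ((), 2) rfl
    exact absurd ht''N (Set.notMem_empty _)

end CE

theorem valuationwise_not_fixed_relation :
    ∃ (A S1 S2 P1 P2 : Type) (M1 : PMTS A S1 P1) (M2 : PMTS A S2 P2)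
      (s0 : S1) (t0 : S2),
      PRefines M1 M2 s0 t0 ∧
      ¬ ∃ R : Set (S1 × S2), (s0, t0) ∈ R ∧
          ∀ μ : Set P1, ∃ ν : Set P2, RefCond M1 M2 μ ν R := by
  exact ⟨Unit, Fin 3, Fin 4, Unit, Unit, ceM1, ceM2, 0, 0, cePRefines, ceNoFixed⟩
end

section
/- De-negation correctness: for a state s₀ of a BMTS, the set of implementations satisfies ⟦s₀⟧ = ⋃_{M ∈ Tran(s₀)} ⟦M⟧, where each M ∈ Tran(s₀) is regarded as a state of the de-negation DMTS. -/
lemma sat_foldr_and {X Y : Type} (l : List X) (g : X → BForm Y) (ν : Set Y) :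
    BForm.sat ν (l.foldr (fun x acc => .and (g x) acc) .tt) ↔ ∀ x ∈ l, BForm.sat ν (g x) := by
  induction l with
  | nil => simp [BForm.sat]
  | cons a l ih => simp [BForm.sat, ih]

lemma sat_foldr_or {X Y : Type} (l : List X) (f : X → Y) (ν : Set Y) :
    BForm.sat ν (l.foldr (fun x acc => .or (.var (f x)) acc) (.neg .tt)) ↔ ∃ x ∈ l, f x ∈ ν := by
  induction l with
  | nil => simp [BForm.sat]
  | cons a l ih => simp [BForm.sat, ih]

lemma deNeg_Tran_mem {A S : Type} [Fintype A] [Fintype S] (M : BMTS A S)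
    (E : Set (A × S)) (N' : Set (A × Set (A × S))) :
    N' ∈ M.deNeg.Tran ∅ E ↔ (N' ⊆ M.deNeg.Tsucc E ∧
      ∀ q ∈ E, ∃ E' ∈ M.Tran ∅ q.2, (q.1, E') ∈ N') := by
  unfold PMTS.Tran
  simp only [Set.mem_setOf_eq, and_congr_right_iff]
  intro _
  show BForm.sat _ ((PMTS.deNeg M).Φ E) ↔ _
  unfold PMTS.deNeg
  rw [sat_foldr_and]
  constructor
  · intro h q hq
    have := h q (by simp [hq])
    rw [sat_foldr_or] at this
    obtain ⟨E', hE', hmem⟩ := this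
    simp only [Finset.mem_toList, Set.Finite.mem_toFinset] at hE'
    refine ⟨E', hE', ?_⟩
    simpa using hmem
  · intro h q hq
    simp only [Finset.mem_toList, Set.Finite.mem_toFinset] at hq
    rw [sat_foldr_or]
    obtain ⟨E', hE', hmem⟩ := h q hq
    exact ⟨E', by simp only [Finset.mem_toList, Set.Finite.mem_toFinset]; exact hE', by simp [hmem]⟩

theorem deNeg_correct {A S : Type} [Fintype A] [Fintype S] (M : BMTS A S) (s0 : S)
    (SI : Type) (I : BMTS A SI) (i : SI) (hI : I.IsImplementation) :
    BRefines I M i s0 ↔ ∃ E ∈ M.Tran ∅ s0, BRefines I M.deNeg i E := by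
  constructor
  · rintro ⟨R, hiR, hR⟩
    have key : ∀ p : SI × S, p ∈ R → ∃ N ∈ M.Tran ∅ p.2,
        (∀ q ∈ I.Tsucc p.1, ∃ t', (q.1, t') ∈ N ∧ (q.2, t') ∈ R) ∧
        (∀ q ∈ N, ∃ s', (q.1, s') ∈ I.Tsucc p.1 ∧ (s', q.2) ∈ R) := by
      intro p hp
      exact hR p hp (I.Tsucc p.1) (by rw [hI p.1]; rfl)
    choose! N hN1 hN2 hN3 using key
    refine ⟨N (i, s0), hN1 _ hiR, ?_⟩
    refine ⟨{pF : SI × Set (A × S) | ∃ t, (pF.1, t) ∈ R ∧ pF.2 = N (pF.1, t)},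
      ⟨s0, hiR, rfl⟩, ?_⟩
    rintro ⟨j, F⟩ ⟨t, hjt, hFeq⟩ Ms hMs
    dsimp only at hjt hFeq
    subst hFeq
    have hMseq : Ms = I.Tsucc j := by
      have := hI j; rw [this] at hMs; exact hMs
    subst hMseq
    refine ⟨{q : A × Set (A × S) | ∃ j' t', (q.1, t') ∈ N (j, t) ∧ (j', t') ∈ R ∧
        (q.1, j') ∈ I.Tsucc j ∧ q.2 = N (j', t')}, ?_, ?_, ?_⟩
    · rw [deNeg_Tran_mem]
      constructor
      · rintro ⟨a, F'⟩ ⟨j', t', hat', hj't', haj', rfl⟩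
        exact ⟨t', hat', hN1 (j', t') hj't'⟩
      · rintro ⟨a, t'⟩ hq
        obtain ⟨j', haj', hj't'⟩ := hN3 (j, t) hjt (a, t') hq
        exact ⟨N (j', t'), hN1 (j', t') hj't', j', t', hq, hj't', haj', rfl⟩
    · rintro ⟨a, j'⟩ haj'
      obtain ⟨t', hat', hj't'⟩ := hN2 (j, t) hjt (a, j') haj'
      exact ⟨N (j', t'), ⟨j', t', hat', hj't', haj', rfl⟩, ⟨t', hj't', rfl⟩⟩
    · rintro ⟨a, F'⟩ ⟨j', t', hat', hj't', haj', rfl⟩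
      exact ⟨j', haj', ⟨t', hj't', rfl⟩⟩
  · rintro ⟨E, hE, R', hiE, hR'⟩
    refine ⟨{p : SI × S | ∃ F ∈ M.Tran ∅ p.2, (p.1, F) ∈ R'}, ⟨E, hE, hiE⟩, ?_⟩
    rintro ⟨j, t⟩ ⟨F, hF, hjF⟩ Ms hMs
    obtain ⟨N', hN', hmatch1, hmatch2⟩ := hR' (j, F) hjF Ms hMs
    rw [deNeg_Tran_mem] at hN'
    obtain ⟨hsub, hsat⟩ := hN'
    refine ⟨F, hF, ?_, ?_⟩
    · intro q hq
      obtain ⟨F', hF'N', hF'R'⟩ := hmatch1 q hq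
      obtain ⟨t', hqt', hF'⟩ := hsub hF'N'
      exact ⟨t', hqt', F', hF', hF'R'⟩
    · intro q hq
      obtain ⟨E', hE', hE'N'⟩ := hsat q hq
      obtain ⟨j', hj', hj'E'⟩ := hmatch2 (q.1, E') hE'N'
      exact ⟨j', hj', E', hE', hj'E'⟩
end

section
/- If a state s of a globally consistent BMTS and any admissible transition set M ∈ Tran(s) are given, then there exists an implementation I with I ≤ₘ s whose initial state has exactly the transitions in M (i.e., T_I(s_I) = M). -/
def conjForm {X : Type} (l : List X) : BForm (X ⊕ Empty) :=
  l.foldr (fun q acc => .and (.var (Sum.inl q)) acc) .tt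

lemma conjForm_sat {X : Type} (ν : Set (X ⊕ Empty)) (l : List X) :
    BForm.sat ν (conjForm l) ↔ ∀ q ∈ l, Sum.inl q ∈ ν := by
  induction l with
  | nil => simp [conjForm, BForm.sat]
  | cons a l ih =>
    show (Sum.inl a ∈ ν ∧ BForm.sat ν (conjForm l)) ↔ _
    rw [ih]
    simp [List.forall_mem_cons]

lemma mem_listOf {X : Type} [Finite X] (s : Set X) (q : X) :
    q ∈ (Set.toFinite s).toFinset.toList ↔ q ∈ s := by
  simp

lemma inl_mem_val {X : Type} (E : Set X) (q : X) :
    Sum.inl q ∈ Sum.inl '' E ∪ Sum.inr '' (∅ : Set Empty) ↔ q ∈ E := by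
  simp

lemma tran_nonempty {A S : Type} (M : BMTS A S) (hM : M.SemConsistent) (t : S) :
    ∃ N, N ∈ M.Tran ∅ t := by
  obtain ⟨SI, I, i, hImpl, R, hiR, hRef⟩ := hM t
  have hmem : I.Tsucc i ∈ I.Tran ∅ i := by rw [hImpl i]; rfl
  obtain ⟨N, hN, -⟩ := hRef (i, t) hiR (I.Tsucc i) hmem
  exact ⟨N, hN⟩

lemma impl_with_choice {A S : Type} [Finite A] [Finite S]
    (M : BMTS A S) (F : S → Set (A × S)) (hF : ∀ t, F t ∈ M.Tran ∅ t) :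
    ∃ I : BMTS A S, I.IsImplementation ∧ (∀ t, I.Tsucc t = F t) ∧
      IsRefRel I M {p | p.1 = p.2} := by
  have : Finite (A × S) := inferInstance
  set I : BMTS A S := ⟨{x | (x.2.1, x.2.2) ∈ F x.1},
    fun t => conjForm ((Set.toFinite (F t)).toFinset.toList)⟩ with hI
  have hTsucc : ∀ t, I.Tsucc t = F t := fun t => rfl
  have hTran : ∀ t, I.Tran ∅ t = {F t} := by
    intro t
    ext E'
    simp only [PMTS.Tran, Set.mem_setOf_eq, Set.mem_singleton_iff, hI, conjForm_sat]
    constructor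
    · rintro ⟨h1, h2⟩
      apply Set.eq_of_subset_of_subset
      · intro q hq; exact h1 hq
      · intro q hq
        exact (inl_mem_val E' q).mp (h2 q ((mem_listOf (F t) q).mpr hq))
    · rintro rfl
      refine ⟨fun q hq => hq, fun q hq => ?_⟩
      exact (inl_mem_val (F t) q).mpr ((mem_listOf (F t) q).mp hq)
  refine ⟨I, hTran, hTsucc, ?_⟩
  intro p hp Ms hMs
  simp only [Set.mem_setOf_eq] at hp
  have hMseq : Ms = F p.1 := by
    rw [hTran p.1] at hMs; exact hMs
  refine ⟨F p.2, hF p.2, ?_, ?_⟩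
  · intro q hq
    exact ⟨q.2, by rw [← hp, ← hMseq]; exact hq, rfl⟩
  · intro q hq
    exact ⟨q.2, by rw [hMseq, hp]; exact hq, rfl⟩

theorem implementation_with_prescribed_transitions {A S : Type} [Finite A] [Finite S]
    (M : BMTS A S) (hM : M.SemConsistent) (s : S)
    (E : Set (A × S)) (hE : E ∈ M.Tran ∅ s) :
    ∃ I : BMTS A S, I.IsImplementation ∧ I.Tsucc s = E ∧ BRefines I M s s := by
  classical
  set F : S → Set (A × S) := fun t => if t = s then E else Classical.choose (tran_nonempty M hM t)
  have hF : ∀ t, F t ∈ M.Tran ∅ t := by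
    intro t
    by_cases h : t = s
    · subst h; simpa [F] using hE
    · simpa [F, h] using Classical.choose_spec (tran_nonempty M hM t)
  obtain ⟨I, hImpl, hT, hRef⟩ := impl_with_choice M F hF
  exact ⟨I, hImpl, by simp [hT s, F], ⟨{p | p.1 = p.2}, rfl, hRef⟩⟩
end

section
/- Removing a locally inconsistent state from a BMTS does not change the semantics of any other state: if Φ(s) is unsatisfiable, then for every state t ≠ s, the set of implementations of t in the original system equals that in the system with s (and all transitions involving s) removed. -/
open Classical in
lemma sat_remove_aux {A S : Type} (s : S) (φ : BForm ((A × S) ⊕ Empty))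
    (E' : Set (A × {t : S // t ≠ s})) :
    BForm.sat (Sum.inl '' E' ∪ Sum.inr '' (∅ : Set Empty))
      (φ.map (fun y => match y with
        | Sum.inl q => if h : q.2 = s then .neg .tt else .var (Sum.inl (q.1, ⟨q.2, h⟩))
        | Sum.inr e => Empty.elim e)) ↔
    BForm.sat (Sum.inl '' ((fun q : A × {t : S // t ≠ s} => (q.1, q.2.val)) '' E')
      ∪ Sum.inr '' (∅ : Set Empty)) φ := by
  induction φ with
  | tt => simp [BForm.map, BForm.sat]
  | var x =>
    cases x with
    | inl q =>
      obtain ⟨a, v⟩ := q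
      simp only [BForm.map]
      by_cases h : v = s
      · subst h
        rw [dif_pos rfl]
        simp only [BForm.sat, not_true_eq_false, false_iff]
        rintro (⟨y, hy', hey⟩ | ⟨y, hy', hey⟩)
        · obtain ⟨z, hz, rfl⟩ := hy'
          exact z.2.prop (congrArg Prod.snd (Sum.inl.inj hey))
        · exact (Set.notMem_empty y hy').elim
      · rw [dif_neg h]
        simp only [BForm.sat]
        constructor
        · rintro (⟨y, hy', hey⟩ | ⟨y, hy', hey⟩)
          · have hye : y = (a, ⟨v, h⟩) := Sum.inl.inj hey
            subst hye
            exact Or.inl ⟨(a, v), ⟨(a, ⟨v, h⟩), hy', rfl⟩, rfl⟩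
          · exact (Set.notMem_empty y hy').elim
        · rintro (⟨y, hy', hey⟩ | ⟨y, hy', hey⟩)
          · obtain ⟨z, hz, rfl⟩ := hy'
            have h1 : z.1 = a := congrArg Prod.fst (Sum.inl.inj hey)
            have h2 : z.2.val = v := congrArg Prod.snd (Sum.inl.inj hey)
            refine Or.inl ⟨(a, ⟨v, h⟩), ?_, rfl⟩
            have hze : z = (a, ⟨v, h⟩) := Prod.ext h1 (Subtype.ext h2)
            rwa [hze] at hz
          · exact (Set.notMem_empty y hy').elim
    | inr e => exact e.elim
  | neg φ ih => simp only [BForm.map, BForm.sat, ih]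
  | and φ ψ ih1 ih2 => simp only [BForm.map, BForm.sat, ih1, ih2]
  | or φ ψ ih1 ih2 => simp only [BForm.map, BForm.sat, ih1, ih2]

lemma tran_remove {A S : Type} (M : BMTS A S) (s : S) (t : S) (ht : t ≠ s)
    (E' : Set (A × {u : S // u ≠ s})) :
    E' ∈ (M.removeState s).Tran ∅ ⟨t, ht⟩ ↔
      ((fun q : A × {u : S // u ≠ s} => (q.1, q.2.val)) '' E') ∈ M.Tran ∅ t := by
  constructor
  · rintro ⟨hsub, hsat⟩
    refine ⟨?_, (sat_remove_aux s (M.Φ t) E').mp hsat⟩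
    rintro q ⟨z, hz, rfl⟩
    exact hsub hz
  · rintro ⟨hsub, hsat⟩
    refine ⟨?_, (sat_remove_aux s (M.Φ t) E').mpr hsat⟩
    intro q hq
    exact hsub ⟨q, hq, rfl⟩

lemma not_rel_s {A S SI : Type} (M : BMTS A S) (s : S)
    (hs : ∀ V : Set ((A × S) ⊕ Empty), ¬ (M.Φ s).sat V)
    (I : BMTS A SI) (hI : I.IsImplementation)
    (R : Set (SI × S)) (hR : IsRefRel I M R) :
    ∀ u : SI, (u, s) ∉ R := by
  intro u hu
  have hmem : I.Tsucc u ∈ I.Tran ∅ u := by rw [hI u]; rfl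
  obtain ⟨N, hN, _⟩ := hR (u, s) hu _ hmem
  exact hs _ hN.2

theorem remove_inconsistent_state_preserves_semantics {A S : Type}
    (M : BMTS A S) (s : S) (hs : ∀ V : Set ((A × S) ⊕ Empty), ¬ (M.Φ s).sat V)
    (t : S) (ht : t ≠ s)
    (SI : Type) (I : BMTS A SI) (i : SI) (hI : I.IsImplementation) :
    BRefines I M i t ↔ BRefines I (M.removeState s) i ⟨t, ht⟩ := by
  constructor
  · rintro ⟨R, hiR, hR⟩
    refine ⟨{p | (p.1, p.2.val) ∈ R}, hiR, ?_⟩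
    rintro ⟨u, t', ht'⟩ hp Ms hMs
    obtain ⟨N, hN, hfwd, hbwd⟩ := hR (u, t') hp Ms hMs
    have hNs : ∀ q ∈ N, q.2 ≠ s := by
      intro q hq hq2
      obtain ⟨s', _, hs'⟩ := hbwd q hq
      rw [hq2] at hs'
      exact not_rel_s M s hs I hI R hR s' hs'
    refine ⟨{q | (q.1, q.2.val) ∈ N}, ?_, ?_, ?_⟩
    · rw [tran_remove]
      have : ((fun q : A × {u : S // u ≠ s} => (q.1, q.2.val)) ''
          {q | (q.1, q.2.val) ∈ N}) = N := by
        ext q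
        constructor
        · rintro ⟨z, hz, rfl⟩; exact hz
        · intro hq
          exact ⟨(q.1, ⟨q.2, hNs q hq⟩), hq, rfl⟩
      rwa [this]
    · intro q hq
      obtain ⟨t'', ht''N, ht''R⟩ := hfwd q hq
      have h2 : t'' ≠ s := by
        intro h3
        rw [h3] at ht''R
        exact not_rel_s M s hs I hI R hR q.2 ht''R
      exact ⟨⟨t'', h2⟩, ht''N, ht''R⟩
    · rintro q hq
      obtain ⟨s', hs'Ms, hs'R⟩ := hbwd (q.1, q.2.val) hq
      exact ⟨s', hs'Ms, hs'R⟩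
  · rintro ⟨R', hiR', hR'⟩
    refine ⟨{p | ∃ h : p.2 ≠ s, (p.1, ⟨p.2, h⟩) ∈ R'}, ⟨ht, hiR'⟩, ?_⟩
    rintro ⟨u, t'⟩ ⟨h, hmem⟩ Ms hMs
    obtain ⟨N', hN', hfwd, hbwd⟩ := hR' (u, ⟨t', h⟩) hmem Ms hMs
    refine ⟨(fun q : A × {v : S // v ≠ s} => (q.1, q.2.val)) '' N',
      (tran_remove M s t' h N').mp hN', ?_, ?_⟩
    · intro q hq
      obtain ⟨v', hv'N, hv'R⟩ := hfwd q hq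
      exact ⟨v'.val, ⟨(q.1, v'), hv'N, rfl⟩, v'.prop, hv'R⟩
    · rintro q ⟨z, hz, rfl⟩
      obtain ⟨s', hs'Ms, hs'R⟩ := hbwd z hz
      exact ⟨s', hs'Ms, z.2.prop, hs'R⟩
end

section
/- Soundness of Avoid: for processes s, t₁,…,tₙ of a finite, globally consistent BMTS, if (s, {t₁,…,tₙ}) ∈ Avoid, then there exists an implementation I such that I ≤ₘ s and I ≰ₘ tᵢ for every i ∈ {1,…,n}. -/
namespace AvoidSoundAux

lemma sat_map {X Y : Type} (ν : Set Y) (f : X → BForm Y) (φ : BForm X) :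
    BForm.sat ν (φ.map f) ↔ BForm.sat {x | BForm.sat ν (f x)} φ := by
  induction φ <;> simp [BForm.map, BForm.sat, *]

lemma sat_foldr {X K : Type} (ν : Set X) (g : K → X) (l : List K) :
    BForm.sat ν (l.foldr (fun k acc => .and (.var (g k)) acc) .tt) ↔ ∀ k ∈ l, g k ∈ ν := by
  induction l with
  | nil => simp [BForm.sat]
  | cons a l ih => simp [BForm.sat, ih]

variable {A : Type} {K : Type} [Fintype K] {SI : K → Type}

/-- The embedding of a component's transitions. -/
def emb (k : K) (q : A × SI k) : A × Option (Σ k, SI k) := (q.1, some ⟨k, q.2⟩)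

lemma emb_inj (k : K) : Function.Injective (emb (A := A) (SI := SI) k) := by
  rintro ⟨a, x⟩ ⟨b, y⟩ h
  have h1 : a = b := congrArg Prod.fst h
  have h2 : (some (⟨k, x⟩ : Σ k, SI k)) = some ⟨k, y⟩ := congrArg Prod.snd h
  obtain ⟨-, hx⟩ := Sigma.mk.inj_iff.mp (Option.some_injective _ h2)
  exact Prod.ext h1 (eq_of_heq hx)

/-- Relabeling of successor states for a component. -/
def relabel (k : K) : (A × SI k) ⊕ Empty → BForm ((A × Option (Σ k, SI k)) ⊕ Empty)
  | Sum.inl q => .var (Sum.inl (emb k q))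
  | Sum.inr e => e.elim

lemma valuation_eq (k : K) (E0 : Set (A × SI k)) :
    {y : (A × SI k) ⊕ Empty |
        BForm.sat (Sum.inl '' (emb k '' E0) ∪ Sum.inr '' (∅ : Set Empty)) (relabel k y)}
      = Sum.inl '' E0 ∪ Sum.inr '' (∅ : Set Empty) := by
  ext y
  rcases y with q | e
  · simp only [Set.mem_setOf_eq, relabel, BForm.sat, Set.image_empty, Set.union_empty,
      Set.mem_image]
    constructor
    · rintro ⟨q', ⟨q0, hq0, rfl⟩, heq⟩
      have h : q0 = q := emb_inj k (Sum.inl_injective heq)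
      exact ⟨q0, hq0, congrArg Sum.inl h⟩
    · rintro ⟨q', hq', heq⟩
      have h : q' = q := Sum.inl_injective heq
      exact ⟨emb k q', ⟨q', hq', rfl⟩, congrArg Sum.inl (by rw [h])⟩
  · exact e.elim

/-- Combination of a family of BMTS with a fresh root `none`. -/
noncomputable def combined (I : ∀ k, BMTS A (SI k)) (ii : ∀ k, SI k) (act : K → A) :
    BMTS A (Option (Σ k, SI k)) where
  T := {x | (∃ k, x = (none, act k, some ⟨k, ii k⟩)) ∨
        (∃ (k : K) (a : A) (x' y' : SI k),
          x = (some ⟨k, x'⟩, a, some ⟨k, y'⟩) ∧ (x', a, y') ∈ (I k).T)}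
  Φ := fun st => match st with
    | none => (Finset.univ : Finset K).toList.foldr
        (fun k acc => .and (.var (Sum.inl (act k, some ⟨k, ii k⟩))) acc) .tt
    | some ⟨k, x⟩ => ((I k).Φ x).map (relabel k)

variable (I : ∀ k, BMTS A (SI k)) (ii : ∀ k, SI k) (act : K → A)

lemma combined_Tsucc_none :
    (combined I ii act).Tsucc none = {q | ∃ k, q = (act k, some ⟨k, ii k⟩)} := by
  ext q
  constructor
  · rintro (⟨k, hk⟩ | ⟨k, a', x', y', hk, _⟩)
    · have h1 : q.1 = act k := congrArg (fun z => z.2.1) hk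
      have h2 : q.2 = some ⟨k, ii k⟩ := congrArg (fun z => z.2.2) hk
      exact ⟨k, Prod.ext h1 h2⟩
    · exact absurd (congrArg Prod.fst hk) (by simp)
  · rintro ⟨k, rfl⟩
    exact Or.inl ⟨k, rfl⟩

lemma combined_sat_none (E : Set (A × Option (Σ k, SI k))) :
    BForm.sat (Sum.inl '' E ∪ Sum.inr '' (∅ : Set Empty)) ((combined I ii act).Φ none)
      ↔ ∀ k : K, (act k, some ⟨k, ii k⟩) ∈ E := by
  have hΦ : (combined I ii act).Φ none = (Finset.univ : Finset K).toList.foldr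
      (fun k acc => .and (.var (Sum.inl (act k, some ⟨k, ii k⟩))) acc) .tt := rfl
  rw [hΦ, sat_foldr]
  simp only [Set.image_empty, Set.union_empty]
  constructor
  · intro h k
    obtain ⟨q', hq', heq⟩ := h k (Finset.mem_toList.mpr (Finset.mem_univ k))
    rwa [(Sum.inl_injective heq : q' = _)] at hq'
  · intro h k _
    exact ⟨_, h k, rfl⟩

lemma combined_Tran_none :
    (combined I ii act).Tran ∅ none = {(combined I ii act).Tsucc none} := by
  ext E
  rw [Set.mem_singleton_iff]
  constructor
  · rintro ⟨hsub, hs⟩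
    refine Set.Subset.antisymm hsub ?_
    rw [combined_Tsucc_none]
    rintro q ⟨k, rfl⟩
    exact (combined_sat_none I ii act E).mp hs k
  · rintro rfl
    refine ⟨le_refl _, (combined_sat_none I ii act _).mpr fun k => ?_⟩
    rw [combined_Tsucc_none]
    exact ⟨k, rfl⟩

lemma combined_Tsucc_some (k : K) (x : SI k) :
    (combined I ii act).Tsucc (some ⟨k, x⟩) = emb k '' (I k).Tsucc x := by
  ext q
  constructor
  · rintro (⟨k', hk⟩ | ⟨k', a, x', y', hk, hT⟩)
    · exact absurd (congrArg Prod.fst hk) (by simp)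
    · have h1 : (some ⟨k, x⟩ : Option (Σ k, SI k)) = some ⟨k', x'⟩ := congrArg Prod.fst hk
      have h2 : q.1 = a := congrArg (fun z => z.2.1) hk
      have h3 : q.2 = some ⟨k', y'⟩ := congrArg (fun z => z.2.2) hk
      obtain ⟨rfl, hx⟩ := Sigma.mk.inj_iff.mp (Option.some_injective _ h1)
      obtain rfl : x = x' := eq_of_heq hx
      exact ⟨(a, y'), hT, Prod.ext h2.symm h3.symm⟩
  · rintro ⟨⟨a, y⟩, hT, rfl⟩
    exact Or.inr ⟨k, a, x, y, rfl, hT⟩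

lemma combined_Tran_some (k : K) (x : SI k) (E : Set (A × Option (Σ k, SI k))) :
    E ∈ (combined I ii act).Tran ∅ (some ⟨k, x⟩) ↔
      ∃ E0 ∈ (I k).Tran ∅ x, E = emb k '' E0 := by
  have hΦ : (combined I ii act).Φ (some ⟨k, x⟩) = ((I k).Φ x).map (relabel k) := rfl
  constructor
  · rintro ⟨hsub, hsat⟩
    rw [combined_Tsucc_some] at hsub
    have hEeq : E = emb k '' {q | emb k q ∈ E} := by
      apply Set.Subset.antisymm
      · intro e he
        obtain ⟨q, _, rfl⟩ := hsub he
        exact ⟨q, he, rfl⟩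
      · rintro e ⟨q, hq, rfl⟩
        exact hq
    have hsub0 : {q | emb k q ∈ E} ⊆ (I k).Tsucc x := fun q hq => by
      obtain ⟨q', hq', heq⟩ := hsub hq
      rwa [(emb_inj k heq : q' = q)] at hq'
    rw [hEeq, hΦ, sat_map, valuation_eq] at hsat
    exact ⟨_, ⟨hsub0, hsat⟩, hEeq⟩
  · rintro ⟨E0, ⟨hsub0, hsat0⟩, rfl⟩
    refine ⟨?_, ?_⟩
    · rw [combined_Tsucc_some]
      exact Set.image_mono hsub0
    · rw [hΦ, sat_map, valuation_eq]
      exact hsat0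

lemma combined_impl (himpl : ∀ k, (I k).IsImplementation) :
    (combined I ii act).IsImplementation := by
  intro st
  match st with
  | none => exact combined_Tran_none I ii act
  | some ⟨k, x⟩ =>
    ext E
    rw [Set.mem_singleton_iff, combined_Tran_some, combined_Tsucc_some]
    constructor
    · rintro ⟨E0, hE0, rfl⟩
      rw [himpl k, Set.mem_singleton_iff] at hE0
      rw [hE0]
    · rintro rfl
      exact ⟨_, by rw [himpl k]; rfl, rfl⟩

lemma refRel_down {S : Type} (M : BMTS A S) (R : Set (Option (Σ k, SI k) × S))
    (hR : IsRefRel (combined I ii act) M R) (k : K) :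
    IsRefRel (I k) M {p | (some ⟨k, p.1⟩, p.2) ∈ R} := by
  rintro ⟨x, u⟩ hp Ms0 hMs0
  obtain ⟨N, hN, c1, c2⟩ := hR (some ⟨k, x⟩, u) hp (emb k '' Ms0)
    ((combined_Tran_some I ii act k x _).mpr ⟨Ms0, hMs0, rfl⟩)
  refine ⟨N, hN, ?_, ?_⟩
  · intro q hq
    obtain ⟨t', ht'1, ht'2⟩ := c1 (emb k q) ⟨q, hq, rfl⟩
    exact ⟨t', ht'1, ht'2⟩
  · intro q hq
    obtain ⟨s', hs'1, hs'2⟩ := c2 q hq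
    obtain ⟨q0, hq0, heq⟩ := hs'1
    have h1 : q0.1 = q.1 := congrArg Prod.fst heq
    have h2 : (some ⟨k, q0.2⟩ : Option (Σ k, SI k)) = s' := congrArg Prod.snd heq
    refine ⟨q0.2, ?_, ?_⟩
    · show (q.1, q0.2) ∈ Ms0
      rw [← h1]
      exact hq0
    · show (some ⟨k, q0.2⟩, q.2) ∈ R
      rw [h2]
      exact hs'2

lemma combined_refines {S : Type} (M : BMTS A S) (s : S) (Ms : Set (A × S))
    (hMs : Ms ∈ M.Tran ∅ s) (sa : K → S)
    (hact : ∀ k, (act k, sa k) ∈ Ms)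
    (hsurj : ∀ q ∈ Ms, ∃ k, act k = q.1 ∧ sa k = q.2)
    (himpl : ∀ k, (I k).IsImplementation)
    (href : ∀ k, BRefines (I k) M (ii k) (sa k)) :
    BRefines (combined I ii act) M none s := by
  choose Rk hRk1 hRk2 using href
  set R : Set (Option (Σ k, SI k) × S) :=
    insert (none, s) {p | ∃ k x u, p = (some ⟨k, x⟩, u) ∧ (x, u) ∈ Rk k} with hRdef
  refine ⟨R, Set.mem_insert _ _, ?_⟩
  rintro ⟨st, u⟩ hp Ms' hMs'
  rcases Set.mem_insert_iff.mp hp with hp | ⟨k, x, u', hp, hxu⟩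
  · rw [Prod.mk.injEq] at hp
    obtain ⟨rfl, rfl⟩ := hp
    rw [combined_Tran_none, Set.mem_singleton_iff] at hMs'
    subst hMs'
    refine ⟨Ms, hMs, ?_, ?_⟩
    · intro q hq
      rw [combined_Tsucc_none] at hq
      obtain ⟨k, rfl⟩ := hq
      exact ⟨sa k, hact k, Set.mem_insert_iff.mpr (Or.inr ⟨k, ii k, sa k, rfl, hRk1 k⟩)⟩
    · intro q hq
      obtain ⟨k, hk1, hk2⟩ := hsurj q hq
      refine ⟨some ⟨k, ii k⟩, ?_,
        Set.mem_insert_iff.mpr (Or.inr ⟨k, ii k, q.2, rfl, hk2 ▸ hRk1 k⟩)⟩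
      rw [combined_Tsucc_none]
      exact ⟨k, Prod.ext hk1.symm rfl⟩
  · rw [Prod.mk.injEq] at hp
    obtain ⟨rfl, rfl⟩ := hp
    obtain ⟨E0, hE0, rfl⟩ := (combined_Tran_some I ii act k x _).mp hMs'
    obtain ⟨N, hN, c1, c2⟩ := hRk2 k (x, u) hxu E0 hE0
    refine ⟨N, hN, ?_, ?_⟩
    · rintro q ⟨q0, hq0, rfl⟩
      obtain ⟨t', ht'1, ht'2⟩ := c1 q0 hq0
      exact ⟨t', ht'1, Set.mem_insert_iff.mpr (Or.inr ⟨k, q0.2, t', rfl, ht'2⟩)⟩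
    · intro q hq
      obtain ⟨s0, hs01, hs02⟩ := c2 q hq
      exact ⟨some ⟨k, s0⟩, ⟨(q.1, s0), hs01, rfl⟩,
        Set.mem_insert_iff.mpr (Or.inr ⟨k, s0, q.2, rfl, hs02⟩)⟩

end AvoidSoundAux


theorem avoid_sound {A S : Type} [Finite A] [Finite S]
    (M : BMTS A S) (hM : M.SemConsistent) (s : S) (𝒯 : Set S)
    (h : Avoid M s 𝒯) :
    ∃ (SI : Type) (I : BMTS A SI) (i : SI), I.IsImplementation ∧
      BRefines I M i s ∧ ∀ t ∈ 𝒯, ¬ BRefines I M i t := by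
  induction h with
  | empty s =>
    obtain ⟨SI, I, i, himpl, href⟩ := hM s
    exact ⟨SI, I, i, himpl, href, fun t ht => absurd ht (Set.notMem_empty t)⟩
  | step s 𝒯 Ms later hMs h1 h2 IH =>
    classical
    by_cases hAdm : ∃ f, ∃ t' ∈ 𝒯, f ∈ M.Tran ∅ t'
    · -- there is an admissible transition set of some `t' ∈ 𝒯`
      let K := {p : (A × S) × Set (A × S) // p.1 ∈ Ms ∧ ∃ t' ∈ 𝒯, p.2 ∈ M.Tran ∅ t'}
      haveI : Fintype K := Fintype.ofFinite K
      have H : ∀ k : K, ∃ (SI : Type) (I : BMTS A SI) (i : SI), I.IsImplementation ∧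
          BRefines I M i k.1.1.2 ∧
          ∀ t ∈ later k.1.1.1 k.1.1.2 k.1.2, ¬ BRefines I M i t :=
        fun k => IH k.1.2 k.2.2 k.1.1.1 k.1.1.2 k.2.1
      choose SI I ii himpl href havoid using H
      refine ⟨_, AvoidSoundAux.combined I ii (fun k => k.1.1.1), none,
        AvoidSoundAux.combined_impl I ii (fun k => k.1.1.1) himpl, ?_, ?_⟩
      · refine AvoidSoundAux.combined_refines I ii (fun k => k.1.1.1) M s Ms hMs
          (fun k => k.1.1.2) (fun k => k.2.1) ?_ himpl href
        intro q hq
        obtain ⟨f, hf⟩ := hAdm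
        exact ⟨⟨(q, f), hq, hf⟩, rfl, rfl⟩
      · rintro t ht ⟨R, hRt, hRef⟩
        have hTs : (AvoidSoundAux.combined I ii (fun k => k.1.1.1)).Tsucc none ∈
            (AvoidSoundAux.combined I ii (fun k => k.1.1.1)).Tran ∅ none := by
          rw [AvoidSoundAux.combined_Tran_none]; rfl
        obtain ⟨Nt, hNt, c1, c2⟩ := hRef (none, t) hRt _ hTs
        rcases h1 t ht Nt hNt with ⟨a, ⟨ta, hta, hlat⟩ | ⟨sa0, hsa0, hlat⟩⟩
        · obtain ⟨s', hs'1, hs'2⟩ := c2 (a, ta) hta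
          rw [AvoidSoundAux.combined_Tsucc_none] at hs'1
          obtain ⟨k, hk⟩ := hs'1
          have ha : a = k.1.1.1 := congrArg Prod.fst hk
          have hsome : s' = some ⟨k, ii k⟩ := congrArg Prod.snd hk
          have hmem : ta ∈ later k.1.1.1 k.1.1.2 k.1.2 := by
            rw [← ha]
            exact hlat k.1.1.2 (by rw [ha]; exact k.2.1) k.1.2 k.2.2
          refine havoid k ta hmem ⟨_, ?_, AvoidSoundAux.refRel_down I ii
            (fun k => k.1.1.1) M R hRef k⟩
          show (some ⟨k, ii k⟩, ta) ∈ R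
          rw [← hsome]
          exact hs'2
        · set k : K := ⟨((a, sa0), Nt), hsa0, t, ht, hNt⟩ with hkdef
          have hq : ((fun k : K => k.1.1.1) k, some ⟨k, ii k⟩) ∈
              (AvoidSoundAux.combined I ii (fun k => k.1.1.1)).Tsucc none := by
            rw [AvoidSoundAux.combined_Tsucc_none]
            exact ⟨k, rfl⟩
          obtain ⟨t', ht'1, ht'2⟩ := c1 _ hq
          have hmem : t' ∈ later k.1.1.1 k.1.1.2 k.1.2 := hlat t' ht'1
          exact havoid k t' hmem ⟨_, ht'2, AvoidSoundAux.refRel_down I ii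
            (fun k => k.1.1.1) M R hRef k⟩
    · -- no `t' ∈ 𝒯` has any admissible transition set
      obtain ⟨SI, I, i, himpl, href⟩ := hM s
      refine ⟨SI, I, i, himpl, href, ?_⟩
      rintro t ht ⟨R, hRt, hRef⟩
      have hTs : I.Tsucc i ∈ I.Tran ∅ i := by rw [himpl i]; rfl
      obtain ⟨N, hN, -, -⟩ := hRef (i, t) hRt _ hTs
      exact hAdm ⟨N, t, ht, hN⟩
end
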